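/- Splitting lemma for queue networks: let C be a list that is an interleaving of disjoint subsequences A and B. If A can be processed through s parallel queues to achieve output LDS at most ℓ, and B can be processed through s' parallel queues to achieve output LDS at most t, then C can be processed through s + s' − 1 parallel queues to achieve output LDS at most ℓ + t. -/

import Mathlib

def LDS (a : List ℤ) : ℕ :=
  ((a.sublists.filter (fun l => decide (l.IsChain (· > ·)))).map List.length).foldr max 0

inductive Interleave : List ℤ → List ℤ → List ℤ → Prop
  | nil : Interleave [] [] []
  | left {A B C : List ℤ} (x : ℤ) : Interleave A B C → Interleave (x :: A) B (x :: C)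
  | right {A B C : List ℤ} (x : ℤ) : Interleave A B C → Interleave A (x :: B) (x :: C)

inductive KInterleave : {k : ℕ} → (Fin k → List ℤ) → List ℤ → Prop
  | nil {k : ℕ} : KInterleave (fun _ : Fin k => []) []
  | cons {k : ℕ} (i : Fin k) (x : ℤ) {qs : Fin k → List ℤ} {C : List ℤ} :
      KInterleave qs C → KInterleave (Function.update qs i (x :: qs i)) (x :: C)

/-- `Lam m X` : the minimum LDS of an output obtainable by processing `X`
through `m` parallel queues. -/
noncomputable def Lam (m : ℕ) (X : List ℤ) : ℕ :=
  sInf {r | ∃ (qs : Fin m → List ℤ) (C : List ℤ),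
    KInterleave qs X ∧ KInterleave qs C ∧ LDS C = r}

lemma le_foldr_max {l : List ℕ} {a : ℕ} (h : a ∈ l) : a ≤ l.foldr max 0 := by
  induction l with
  | nil => cases h
  | cons x xs ih =>
    rcases List.mem_cons.1 h with rfl | h
    · exact le_max_left _ _
    · exact le_trans (ih h) (le_max_right _ _)

lemma foldr_max_le {l : List ℕ} {n : ℕ} (h : ∀ a ∈ l, a ≤ n) : l.foldr max 0 ≤ n := by
  induction l with
  | nil => simp
  | cons x xs ih =>
    simp only [List.foldr_cons, max_le_iff]
    exact ⟨h x (by simp), ih fun a ha => h a (by simp [ha])⟩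

lemma length_le_LDS {D X : List ℤ} (hsub : D.Sublist X) (hch : D.Chain' (· > ·)) :
    D.length ≤ LDS X := by
  apply le_foldr_max
  simp only [List.mem_map]
  refine ⟨D, ?_, rfl⟩
  rw [List.mem_filter]
  exact ⟨List.mem_sublists.2 hsub, decide_eq_true hch⟩

lemma LDS_le {X : List ℤ} {n : ℕ} (h : ∀ D : List ℤ, D.Sublist X → D.Chain' (· > ·) → D.length ≤ n) :
    LDS X ≤ n := by
  apply foldr_max_le
  intro a ha
  simp only [List.mem_map, List.mem_filter, List.mem_sublists] at ha
  obtain ⟨D, ⟨hD, hch⟩, rfl⟩ := ha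
  exact h D hD (of_decide_eq_true (p := D.IsChain (· > ·)) hch)

lemma Interleave.length_eq {A B C : List ℤ} (h : Interleave A B C) :
    C.length = A.length + B.length := by
  induction h <;> simp [*] <;> omega

lemma Interleave.sublist_left {A B C : List ℤ} (h : Interleave A B C) : A.Sublist C := by
  induction h with
  | nil => exact List.Sublist.refl _
  | left x _ ih => exact ih.cons₂ x
  | right x _ ih => exact ih.cons x

lemma Interleave.sublist_right {A B C : List ℤ} (h : Interleave A B C) : B.Sublist C := by
  induction h with
  | nil => exact List.Sublist.refl _
  | left x _ ih => exact ih.cons x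
  | right x _ ih => exact ih.cons₂ x

lemma interleave_nil_right (A : List ℤ) : Interleave A [] A := by
  induction A with
  | nil => exact .nil
  | cons x A ih => exact .left x ih

lemma interleave_nil_left (B : List ℤ) : Interleave [] B B := by
  induction B with
  | nil => exact .nil
  | cons x B ih => exact .right x ih

lemma interleave_append (A B : List ℤ) : Interleave A B (A ++ B) := by
  induction A with
  | nil => simpa using interleave_nil_left B
  | cons x A ih => exact .left x ih

lemma interleave_nil_right_eq {A C : List ℤ} (h : Interleave A [] C) : A = C :=
  h.sublist_left.eq_of_length (by simpa using h.length_eq.symm)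

lemma sublist_split {A B C : List ℤ} (h : Interleave A B C) :
    ∀ D : List ℤ, D.Sublist C → ∃ D1 D2, Interleave D1 D2 D ∧ D1.Sublist A ∧ D2.Sublist B := by
  induction h with
  | nil =>
    intro D hD
    rw [List.sublist_nil.1 hD]
    exact ⟨[], [], .nil, List.Sublist.refl _, List.Sublist.refl _⟩
  | left x h ih =>
    intro D hD
    cases hD with
    | cons _ hD =>
      obtain ⟨D1, D2, hI, h1, h2⟩ := ih D hD
      exact ⟨D1, D2, hI, h1.cons x, h2⟩
    | cons_cons _ hD =>
      obtain ⟨D1, D2, hI, h1, h2⟩ := ih _ hD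
      exact ⟨x :: D1, D2, .left x hI, h1.cons₂ x, h2⟩
  | right x h ih =>
    intro D hD
    cases hD with
    | cons _ hD =>
      obtain ⟨D1, D2, hI, h1, h2⟩ := ih D hD
      exact ⟨D1, D2, hI, h1, h2.cons x⟩
    | cons_cons _ hD =>
      obtain ⟨D1, D2, hI, h1, h2⟩ := ih _ hD
      exact ⟨D1, x :: D2, .right x hI, h1, h2.cons₂ x⟩

lemma LDS_interleave_le {α β O : List ℤ} (h : Interleave α β O) :
    LDS O ≤ LDS α + LDS β := by
  apply LDS_le
  intro D hD hch
  obtain ⟨D1, D2, hI, h1, h2⟩ := sublist_split h D hD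
  have c1 : D1.Chain' (· > ·) := hch.sublist hI.sublist_left
  have c2 : D2.Chain' (· > ·) := hch.sublist hI.sublist_right
  rw [hI.length_eq]
  exact Nat.add_le_add (length_le_LDS h1 c1) (length_le_LDS h2 c2)

lemma kinterleave_single {k : ℕ} (i : Fin k) (X : List ℤ) :
    KInterleave (Function.update (fun _ => ([] : List ℤ)) i X) X := by
  induction X with
  | nil =>
    have h : (Function.update (fun _ : Fin k => ([] : List ℤ)) i []) = fun _ => [] :=
      Function.update_eq_self i _
    rw [h]; exact .nil
  | cons x X ih =>
    have h := KInterleave.cons i x ih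
    simpa [Function.update_self, Function.update_idem] using h

lemma kinterleave_split {n : ℕ} {qs : Fin (n + 1) → List ℤ} {X : List ℤ}
    (h : KInterleave qs X) :
    ∃ Y, KInterleave (Fin.init qs) Y ∧ Interleave Y (qs (Fin.last n)) X := by
  induction X generalizing qs with
  | nil =>
    cases h
    exact ⟨[], KInterleave.nil, .nil⟩
  | cons x X ih =>
    cases h with
    | cons i =>
      rename_i qs0 h0
      obtain ⟨Y, hY, hIY⟩ := ih h0
      cases i using Fin.lastCases with
      | last =>
        refine ⟨Y, ?_, ?_⟩
        · have : Fin.init (Function.update qs0 (Fin.last n) (x :: qs0 (Fin.last n)))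
              = Fin.init qs0 := by
            funext j
            simp [Fin.init, Function.update, (Fin.castSucc_lt_last j).ne]
          rw [this]; exact hY
        · simpa [Function.update_self] using Interleave.right x hIY
      | cast j =>
        refine ⟨x :: Y, ?_, ?_⟩
        · have hrw : Fin.init (Function.update qs0 j.castSucc (x :: qs0 j.castSucc))
              = Function.update (Fin.init qs0) j (x :: Fin.init qs0 j) := by
            funext i'
            by_cases h' : i' = j
            · subst h'; simp [Fin.init, Function.update_self]
            · simp [Fin.init, Function.update,
                h', fun hc => h' (Fin.castSucc_injective _ hc)]
          rw [hrw]
          exact KInterleave.cons j x hY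
        · have : Function.update qs0 j.castSucc (x :: qs0 j.castSucc) (Fin.last n)
              = qs0 (Fin.last n) := by
            apply Function.update_of_ne
            exact (Fin.castSucc_lt_last j).ne'
          rw [this]
          exact Interleave.left x hIY

lemma kinterleave_glue_snoc {n : ℕ} {Y Z X : List ℤ} (hI : Interleave Y Z X) :
    ∀ {qs : Fin n → List ℤ}, KInterleave qs Y → KInterleave (Fin.snoc qs Z) X := by
  induction hI with
  | nil =>
    intro qs h
    cases h
    have : (Fin.snoc (fun _ : Fin n => ([] : List ℤ)) [] : Fin (n+1) → List ℤ)
        = fun _ => [] := by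
      funext j
      cases j using Fin.lastCases <;> simp [Fin.snoc_last, Fin.snoc_castSucc]
    rw [this]; exact .nil
  | left y hI ih =>
    intro qs h
    cases h with
    | cons i =>
      rename_i qs0 h0
      have h1 := KInterleave.cons (k := n+1) i.castSucc y (qs := Fin.snoc qs0 _) (ih h0)
      rw [Fin.snoc_update]
      simpa [Fin.snoc_castSucc] using h1
  | right z hI ih =>
    intro qs h
    have h1 := KInterleave.cons (Fin.last n) z (ih h)
    rw [Fin.snoc_last] at h1
    rwa [Fin.update_snoc_last] at h1

lemma append_update_left {m n : ℕ} (p : Fin m → List ℤ) (q : Fin n → List ℤ)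
    (i : Fin m) (x : List ℤ) :
    Fin.append (Function.update p i x) q
      = Function.update (Fin.append p q) (Fin.castAdd n i) x := by
  funext k
  cases k using Fin.addCases with
  | left j =>
    simp only [Fin.append_left, Function.update_apply]
    by_cases h : j = i
    · simp [h]
    · have : ¬ (Fin.castAdd n j = Fin.castAdd n i) := by
        simp only [Fin.ext_iff, Fin.coe_castAdd]
        exact fun hc => h (Fin.ext hc)
      simp [h, this, Fin.append_left]
  | right j =>
    have : ¬ (Fin.natAdd m j = Fin.castAdd n i) := by
      simp only [Fin.ext_iff, Fin.coe_natAdd, Fin.coe_castAdd]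
      omega
    simp [Fin.append_right, Function.update_apply, this]

lemma append_update_right {m n : ℕ} (p : Fin m → List ℤ) (q : Fin n → List ℤ)
    (j : Fin n) (x : List ℤ) :
    Fin.append p (Function.update q j x)
      = Function.update (Fin.append p q) (Fin.natAdd m j) x := by
  funext k
  cases k using Fin.addCases with
  | left i =>
    have : ¬ (Fin.castAdd n i = Fin.natAdd m j) := by
      simp only [Fin.ext_iff, Fin.coe_natAdd, Fin.coe_castAdd]
      omega
    simp [Fin.append_left, Function.update_apply, this]
  | right i =>
    simp only [Fin.append_right, Function.update_apply]
    by_cases h : i = j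
    · simp [h]
    · have : ¬ (Fin.natAdd m i = Fin.natAdd m j) := by
        simp only [Fin.ext_iff, Fin.coe_natAdd]
        exact fun hc => h (Fin.ext (by omega))
      simp [h, this, Fin.append_right]

lemma kinterleave_glue_append {m n : ℕ} {Y Z X : List ℤ} (hI : Interleave Y Z X) :
    ∀ {qs1 : Fin m → List ℤ} {qs2 : Fin n → List ℤ},
      KInterleave qs1 Y → KInterleave qs2 Z → KInterleave (Fin.append qs1 qs2) X := by
  induction hI with
  | nil =>
    intro qs1 qs2 h1 h2
    cases h1; cases h2
    have : (Fin.append (fun _ : Fin m => ([] : List ℤ)) (fun _ : Fin n => ([] : List ℤ)))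
        = fun _ => [] := by
      funext k
      cases k using Fin.addCases with
      | left j => simp [Fin.append_left]
      | right j => simp [Fin.append_right]
    rw [this]; exact .nil
  | left y hI ih =>
    intro qs1 qs2 h1 h2
    cases h1 with
    | cons i =>
      rename_i qs0 h0
      have h := KInterleave.cons (Fin.castAdd n i) y (ih h0 h2)
      rw [Fin.append_left] at h
      rwa [append_update_left]
  | right z hI ih =>
    intro qs1 qs2 h1 h2
    cases h2 with
    | cons i =>
      rename_i qs0 h0
      have h := KInterleave.cons (Fin.natAdd m i) z (ih h1 h0)
      rw [Fin.append_right] at h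
      rwa [append_update_right]

lemma reassoc {A B C : List ℤ} (hC : Interleave A B C) :
    ∀ {A' a B' b : List ℤ}, Interleave A' a A → Interleave B' b B →
      ∃ W M, Interleave A' B' W ∧ Interleave a b M ∧ Interleave W M C := by
  induction hC with
  | nil =>
    intro A' a B' b h1 h2
    cases h1; cases h2
    exact ⟨[], [], .nil, .nil, .nil⟩
  | left x hC ih =>
    intro A' a B' b h1 h2
    cases h1 with
    | left x h1' =>
      obtain ⟨W, M, hW, hM, hWM⟩ := ih h1' h2
      exact ⟨x :: W, M, .left x hW, hM, .left x hWM⟩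
    | right x h1' =>
      obtain ⟨W, M, hW, hM, hWM⟩ := ih h1' h2
      exact ⟨W, x :: M, hW, .left x hM, .right x hWM⟩
  | right x hC ih =>
    intro A' a B' b h1 h2
    cases h2 with
    | left x h2' =>
      obtain ⟨W, M, hW, hM, hWM⟩ := ih h1 h2'
      exact ⟨x :: W, M, .right x hW, hM, .left x hWM⟩
    | right x h2' =>
      obtain ⟨W, M, hW, hM, hWM⟩ := ih h1 h2'
      exact ⟨W, x :: M, hW, .right x hM, .right x hWM⟩

lemma shuffle : ∀ (N : ℕ) (α β α' a β' b M : List ℤ), α.length + β.length ≤ N →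
    Interleave α' a α → Interleave β' b β → Interleave a b M →
    ∃ O W', Interleave α β O ∧ Interleave α' β' W' ∧ Interleave W' M O := by
  intro N
  induction N with
  | zero =>
    intro α β α' a β' b M hlen h1 h2 hM
    have hα : α = [] := by
      cases α with
      | nil => rfl
      | cons _ _ => simp at hlen
    have hβ : β = [] := by
      cases β with
      | nil => rfl
      | cons _ _ => simp at hlen
    subst hα; subst hβ
    cases h1; cases h2; cases hM
    exact ⟨[], [], .nil, .nil, .nil⟩
  | succ N ih =>
    intro α β α' a β' b M hlen h1 h2 hM
    cases hM with
    | nil =>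
      have hα : α' = α := interleave_nil_right_eq h1
      have hβ : β' = β := interleave_nil_right_eq h2
      subst hα; subst hβ
      exact ⟨α' ++ β', α' ++ β', interleave_append _ _, interleave_append _ _,
        interleave_nil_right _⟩
    | left x hM' =>
      -- a = x :: a', Interleave a' b M'
      rename_i a' M'
      cases h1 with
      | left y h1' =>
        rename_i α''  _
        -- α' = y :: α'', α = y :: αt
        rename_i αt
        obtain ⟨O, W', hO, hW, hWM⟩ :=
          ih _ β _ (x :: a') β' b (x :: M') (by simp at hlen ⊢; omega) h1' h2 (.left x hM')
        exact ⟨y :: O, y :: W', .left y hO, .left y hW, .left y hWM⟩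
      | right y h1' =>
        rename_i αt
        obtain ⟨O, W', hO, hW, hWM⟩ :=
          ih αt β α' a' β' b M' (by simp at hlen ⊢; omega) h1' h2 hM'
        exact ⟨x :: O, W', .left x hO, hW, .right x hWM⟩
    | right x hM' =>
      rename_i b' M'
      cases h2 with
      | left y h2' =>
        rename_i β'' _
        rename_i βt
        obtain ⟨O, W', hO, hW, hWM⟩ :=
          ih α _ α' a _ (x :: b') (x :: M') (by simp at hlen ⊢; omega) h1 h2' (.right x hM')
        exact ⟨y :: O, y :: W', .right y hO, .right y hW, .left y hWM⟩
      | right y h2' =>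
        rename_i βt
        obtain ⟨O, W', hO, hW, hWM⟩ :=
          ih α βt α' a β' b' M' (by simp at hlen ⊢; omega) h1 h2' hM'
        exact ⟨x :: O, W', .right x hO, hW, .right x hWM⟩

lemma lam_witness {m : ℕ} (hm : 0 < m) (X : List ℤ) :
    ∃ (qs : Fin m → List ℤ) (C : List ℤ),
      KInterleave qs X ∧ KInterleave qs C ∧ LDS C = Lam m X := by
  have hne : {r | ∃ (qs : Fin m → List ℤ) (C : List ℤ),
      KInterleave qs X ∧ KInterleave qs C ∧ LDS C = r}.Nonempty :=
    ⟨LDS X, Function.update (fun _ => []) ⟨0, hm⟩ X, X,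
      kinterleave_single _ _, kinterleave_single _ _, rfl⟩
  exact Nat.sInf_mem hne

/-- splitting lemma: if `C` is an interleaving of `A` and `B`,
`Λ_s(A) ≤ ℓ` and `Λ_{s'}(B) ≤ t`, then `Λ_{s+s'-1}(C) ≤ ℓ + t`. -/
theorem splitting_lemma (A B C : List ℤ) (hC : Interleave A B C)
    (s s' : ℕ) (hs : 0 < s) (hs' : 0 < s') (ℓ t : ℕ)
    (hA : Lam s A ≤ ℓ) (hB : Lam s' B ≤ t) :
    Lam (s + s' - 1) C ≤ ℓ + t := by
  obtain ⟨nA, rfl⟩ : ∃ nA, s = nA + 1 := ⟨s - 1, by omega⟩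
  obtain ⟨nB, rfl⟩ : ∃ nB, s' = nB + 1 := ⟨s' - 1, by omega⟩
  obtain ⟨qsA, α, hqA, hqα, hLα⟩ := lam_witness (by omega : 0 < nA + 1) A
  obtain ⟨qsB, β, hqB, hqβ, hLβ⟩ := lam_witness (by omega : 0 < nB + 1) B
  have hαℓ : LDS α ≤ ℓ := le_trans (le_of_eq hLα) hA
  have hβt : LDS β ≤ t := le_trans (le_of_eq hLβ) hB
  obtain ⟨A', hA'K, hA'I⟩ := kinterleave_split hqA
  obtain ⟨α', hα'K, hα'I⟩ := kinterleave_split hqα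
  obtain ⟨B', hB'K, hB'I⟩ := kinterleave_split hqB
  obtain ⟨β', hβ'K, hβ'I⟩ := kinterleave_split hqβ
  obtain ⟨W, M, hW, hM, hWM⟩ := reassoc hC hA'I hB'I
  obtain ⟨O, W', hOαβ, hW', hW'M⟩ :=
    shuffle (α.length + β.length) α β α' (qsA (Fin.last nA)) β' (qsB (Fin.last nB)) M
      le_rfl hα'I hβ'I hM
  have hKC : KInterleave (Fin.snoc (Fin.append (Fin.init qsA) (Fin.init qsB)) M) C :=
    kinterleave_glue_snoc hWM (kinterleave_glue_append hW hA'K hB'K)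
  have hKO : KInterleave (Fin.snoc (Fin.append (Fin.init qsA) (Fin.init qsB)) M) O :=
    kinterleave_glue_snoc hW'M (kinterleave_glue_append hW' hα'K hβ'K)
  have hm : nA + 1 + (nB + 1) - 1 = nA + nB + 1 := by omega
  rw [hm]
  calc Lam (nA + nB + 1) C ≤ LDS O := Nat.sInf_le ⟨_, O, hKC, hKO, rfl⟩
    _ ≤ LDS α + LDS β := LDS_interleave_le hOαβ
    _ ≤ ℓ + t := Nat.add_le_add hαℓ hβt
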